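/- For α > 0 and s > 0, the Laplace transform of the αL-exponential function satisfies ∫_0^∞ e^{-s x} 𝔢_α(x) dx = (1/s) · 𝔢_{α-1}(1/s), i.e. ∫_0^∞ e^{-s x} (∑_{k=0}^∞ x^k/(k!)^(α+1)) dx = (1/s) ∑_{k=0}^∞ s^{-k}/(k!)^α. -/

import Mathlib

open MeasureTheory

private lemma summable_aux (r β : ℝ) (hr : 0 < r) (hβ : 0 < β) :
    Summable fun k : ℕ => r ^ k / (k.factorial : ℝ) ^ β := by
  apply summable_of_ratio_norm_eventually_le (r := 1/2) (by norm_num)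
  have h : Filter.Tendsto (fun n : ℕ => ((n : ℝ) + 1) ^ β) Filter.atTop Filter.atTop := by
    apply (tendsto_rpow_atTop hβ).comp
    exact Filter.tendsto_atTop_add_const_right _ 1 tendsto_natCast_atTop_atTop
  filter_upwards [h.eventually_ge_atTop (2 * r)] with n hn
  have hfac : (0 : ℝ) < (n.factorial : ℝ) := by positivity
  have hn1 : (0 : ℝ) < ((n : ℝ) + 1) := by positivity
  have hpow : (0 : ℝ) < ((n : ℝ) + 1) ^ β := by positivity
  rw [Real.norm_of_nonneg (by positivity), Real.norm_of_nonneg (by positivity)]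
  have hfs : ((n + 1).factorial : ℝ) = ((n : ℝ) + 1) * (n.factorial : ℝ) := by
    rw [Nat.factorial_succ]; push_cast; ring
  rw [hfs, Real.mul_rpow hn1.le hfac.le, pow_succ, mul_comm (r ^ n) r]
  have key : r / ((n : ℝ) + 1) ^ β ≤ 1 / 2 := by
    rw [div_le_div_iff₀ hpow (by norm_num)]
    linarith
  calc r * r ^ n / (((n : ℝ) + 1) ^ β * (n.factorial : ℝ) ^ β)
      = (r / ((n : ℝ) + 1) ^ β) * (r ^ n / (n.factorial : ℝ) ^ β) := by ring
    _ ≤ (1 / 2) * (r ^ n / (n.factorial : ℝ) ^ β) := by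
        apply mul_le_mul_of_nonneg_right key (by positivity)
    _ = 1 / 2 * (r ^ n / (n.factorial : ℝ) ^ β) := by ring

private lemma integral_exp_pow (s : ℝ) (hs : 0 < s) (k : ℕ) :
    ∫ x in Set.Ioi (0 : ℝ), Real.exp (-s * x) * x ^ k
      = (1 / s) ^ (k + 1) * (k.factorial : ℝ) := by
  have h := Real.integral_rpow_mul_exp_neg_mul_Ioi (a := (k : ℝ) + 1) (r := s)
    (by positivity) hs
  rw [Real.Gamma_nat_eq_factorial] at h
  rw [show ((k : ℝ) + 1) = ((k + 1 : ℕ) : ℝ) by push_cast; ring,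
    Real.rpow_natCast] at h
  rw [← h]
  refine setIntegral_congr_fun measurableSet_Ioi (fun t ht => ?_)
  rw [show (((k + 1 : ℕ) : ℝ) - 1) = (k : ℝ) by push_cast; ring,
    Real.rpow_natCast, neg_mul, mul_comm]

/-- Laplace transform of the αL-exponential: ∫₀^∞ e^{-sx} 𝔢_α(x) dx = (1/s) 𝔢_{α-1}(1/s). -/
theorem laplace_alphaL_exponential (α s : ℝ) (hα : α > 0) (hs : s > 0) :
    ∫ x in Set.Ioi (0 : ℝ),
        Real.exp (-s * x) * ∑' k : ℕ, x ^ k / (k.factorial : ℝ) ^ (α + 1)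
      = (1 / s) * ∑' k : ℕ, (1 / s) ^ k / (k.factorial : ℝ) ^ α := by
  have hsinv : (0 : ℝ) < 1 / s := by positivity
  set F : ℕ → ℝ → ℝ :=
    fun k x => Real.exp (-s * x) * x ^ k / (k.factorial : ℝ) ^ (α + 1) with hF
  have hInt : ∀ k, IntegrableOn (F k) (Set.Ioi 0) := by
    intro k
    have h1 : IntegrableOn (fun x : ℝ => x ^ (k : ℝ) * Real.exp (-s * x ^ (1 : ℝ)))
        (Set.Ioi 0) := by
      refine integrableOn_rpow_mul_exp_neg_mul_rpow ?_ zero_lt_one hs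
      have : (0 : ℝ) ≤ (k : ℝ) := Nat.cast_nonneg k
      linarith
    have h2 := h1.div_const ((k.factorial : ℝ) ^ (α + 1))
    refine IntegrableOn.congr_fun h2 (fun x hx => ?_) measurableSet_Ioi
    simp only [hF, Real.rpow_natCast, Real.rpow_one]
    ring
  have hIval : ∀ k, ∫ x in Set.Ioi 0, F k x
      = (1 / s) ^ (k + 1) * (k.factorial : ℝ) / (k.factorial : ℝ) ^ (α + 1) := by
    intro k
    rw [hF]
    simp only
    rw [integral_div, integral_exp_pow s hs k]
  have hnorm : ∀ k, ∫ x in Set.Ioi 0, ‖F k x‖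
      = (1 / s) ^ (k + 1) * (k.factorial : ℝ) / (k.factorial : ℝ) ^ (α + 1) := by
    intro k
    rw [← hIval k]
    refine setIntegral_congr_fun measurableSet_Ioi fun x hx => ?_
    have hx0 : (0 : ℝ) < x := hx
    exact Real.norm_of_nonneg (by rw [hF]; positivity)
  have hterm : ∀ k : ℕ, (1 / s) ^ (k + 1) * (k.factorial : ℝ) / (k.factorial : ℝ) ^ (α + 1)
      = (1 / s) * ((1 / s) ^ k / (k.factorial : ℝ) ^ α) := by
    intro k
    have hf : (0 : ℝ) < (k.factorial : ℝ) := by positivity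
    have hfα : (0 : ℝ) < (k.factorial : ℝ) ^ α := by positivity
    rw [Real.rpow_add hf, Real.rpow_one, pow_succ]
    field_simp
  have hsum : Summable fun k => ∫ x in Set.Ioi 0, ‖F k x‖ := by
    simp_rw [hnorm, hterm]
    exact (summable_aux (1 / s) α hsinv hα).mul_left _
  calc ∫ x in Set.Ioi (0 : ℝ),
        Real.exp (-s * x) * ∑' k : ℕ, x ^ k / (k.factorial : ℝ) ^ (α + 1)
      = ∫ x in Set.Ioi (0 : ℝ), ∑' k : ℕ, F k x := by
        refine setIntegral_congr_fun measurableSet_Ioi fun x hx => ?_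
        rw [← tsum_mul_left]
        exact tsum_congr fun k => (mul_div_assoc _ _ _).symm
    _ = ∑' k : ℕ, ∫ x in Set.Ioi (0 : ℝ), F k x :=
        (integral_tsum_of_summable_integral_norm hInt hsum).symm
    _ = ∑' k : ℕ, (1 / s) * ((1 / s) ^ k / (k.factorial : ℝ) ^ α) := by
        exact tsum_congr fun k => by rw [hIval k, hterm k]
    _ = (1 / s) * ∑' k : ℕ, (1 / s) ^ k / (k.factorial : ℝ) ^ α := tsum_mul_left
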